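/- Let U₁, …, U_N, U_test be independent identically distributed real-valued random variables with continuous cumulative distribution function F. Fix ε̂ ∈ (0,1), set v := ⌊(N+1)ε̂⌋, assume 1 ≤ v ≤ N, and set q̂ := U_{(N+1−v)}, the (N+1−v)-th order statistic of U₁, …, U_N. Fix δ ∈ (0,1) and let β_δ denote the δ-quantile of the Beta distribution with parameters (N+1−v, v), i.e. the infimum of all x ∈ [0,1] whose Beta(N+1−v, v) cumulative distribution function value is at least δ. Then with probability at least 1 − δ over the sampling of U₁, …, U_N, the conditional coverage satisfies ℙ(U_test ≤ q̂ ∣ U₁, …, U_N) = F(q̂) ≥ β_δ. -/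

import Mathlib

open MeasureTheory

/-- The `k`-th order statistic (the `k`-th smallest value, zero-indexed) of a
finite tuple of values in a linear order. -/
noncomputable def orderStat {α : Type*} [LinearOrder α] {N : ℕ} (k : Fin N) (v : Fin N → α) : α :=
  v (Tuple.sort v k)

/-- The Beta function `B(a, b) = Γ(a) Γ(b) / Γ(a + b)`. -/
noncomputable def betaFn (a b : ℝ) : ℝ := Real.Gamma a * Real.Gamma b / Real.Gamma (a + b)

/-- The Beta distribution with natural-number parameters `(a, b)`: the measure on `ℝ`
with density `x ↦ x ^ (a - 1) * (1 - x) ^ (b - 1) / B(a, b)` on `[0, 1]` with respect to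
Lebesgue measure. -/
noncomputable def betaMeasureNat (a b : ℕ) : Measure ℝ :=
  volume.withDensity (Set.indicator (Set.Icc 0 1)
    fun x => ENNReal.ofReal (x ^ (a - 1) * (1 - x) ^ (b - 1) / betaFn a b))

open scoped ENNReal

lemma orderStat_le_iff {N : ℕ} (k : Fin N) (w : Fin N → ℝ) (x : ℝ) :
    orderStat k w ≤ x ↔ (k : ℕ) + 1 ≤ (Finset.univ.filter fun i => w i ≤ x).card := by
  set σ := Tuple.sort w with hσ
  have hmono : Monotone (w ∘ σ) := Tuple.monotone_sort w
  constructor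
  · intro h
    have hsub : (Finset.Iic k).image σ ⊆ Finset.univ.filter fun i => w i ≤ x := by
      intro i hi
      simp only [Finset.mem_image, Finset.mem_Iic] at hi
      obtain ⟨j, hj, rfl⟩ := hi
      simp only [Finset.mem_filter, Finset.mem_univ, true_and]
      exact le_trans (hmono hj) h
    calc (k : ℕ) + 1 = (Finset.Iic k).card := by simp [Fin.card_Iic]
      _ = ((Finset.Iic k).image σ).card := (Finset.card_image_of_injective _ σ.injective).symm
      _ ≤ _ := Finset.card_le_card hsub
  · intro h
    by_contra hx
    push_neg at hx
    have hsub : (Finset.univ.filter fun i => w i ≤ x).image σ.symm ⊆ Finset.Iio k := by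
      intro j hj
      simp only [Finset.mem_image, Finset.mem_filter] at hj
      obtain ⟨i, ⟨-, hi⟩, rfl⟩ := hj
      simp only [Finset.mem_Iio]
      by_contra hge
      push_neg at hge
      have := hmono hge
      simp only [Function.comp_apply, Equiv.apply_symm_apply] at this
      exact absurd (lt_of_le_of_lt (this.trans hi) hx) (lt_irrefl _)
    have := Finset.card_le_card hsub
    rw [Finset.card_image_of_injective _ σ.symm.injective, Fin.card_Iio] at this
    omega

lemma hasDeriv_term (j e : ℕ) (hj : 1 ≤ j) (p : ℝ) :
    HasDerivAt (fun p : ℝ => p ^ j * (1 - p) ^ e)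
      (j * p ^ (j - 1) * (1 - p) ^ e - e * p ^ j * (1 - p) ^ (e - 1)) p := by
  have h1 : HasDerivAt (fun p : ℝ => p ^ j) (j * p ^ (j - 1)) p := hasDerivAt_pow j p
  have h2 : HasDerivAt (fun p : ℝ => (1 - p) ^ e) (e * (1 - p) ^ (e - 1) * (-1)) p :=
    ((hasDerivAt_id p).const_sub 1).pow e
  have := h1.mul h2
  refine this.congr_deriv ?_
  ring

lemma binom_tail_eq (N m : ℕ) (hm : 1 ≤ m) (hmN : m ≤ N) (p : ℝ) :
    ∑ j ∈ Finset.Ico m (N + 1), (N.choose j : ℝ) * p ^ j * (1 - p) ^ (N - j)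
      = (m * N.choose m : ℝ) * ∫ x in (0:ℝ)..p, x ^ (m - 1) * (1 - x) ^ (N - m) := by
  set f : ℝ → ℝ := fun p => ∑ j ∈ Finset.Ico m (N + 1), (N.choose j : ℝ) * p ^ j * (1 - p) ^ (N - j)
  set g : ℝ → ℝ := fun p => (m * N.choose m : ℝ) * ∫ x in (0:ℝ)..p, x ^ (m - 1) * (1 - x) ^ (N - m)
  have hcont : Continuous fun x : ℝ => x ^ (m - 1) * (1 - x) ^ (N - m) := by continuity
  set W : ℝ → ℕ → ℝ := fun p j => (j : ℝ) * N.choose j * p ^ (j - 1) * (1 - p) ^ (N - j) with hW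
  have hfd : ∀ p, HasDerivAt f ((m : ℝ) * N.choose m * p ^ (m - 1) * (1 - p) ^ (N - m)) p := by
    intro p
    have hterm : ∀ j ∈ Finset.Ico m (N + 1),
        HasDerivAt (fun p : ℝ => (N.choose j : ℝ) * p ^ j * (1 - p) ^ (N - j))
          (W p j - W p (j + 1)) p := by
      intro j hj
      simp only [Finset.mem_Ico] at hj
      have h1 : HasDerivAt (fun p : ℝ => (N.choose j : ℝ) * (p ^ j * (1 - p) ^ (N - j)))
          ((N.choose j : ℝ) * ((j : ℝ) * p ^ (j - 1) * (1 - p) ^ (N - j)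
            - (N - j : ℕ) * p ^ j * (1 - p) ^ (N - j - 1))) p :=
        (hasDeriv_term j (N - j) (le_trans hm hj.1) p).const_mul _
      have key : (N.choose j : ℝ) * ((j : ℝ) * p ^ (j - 1) * (1 - p) ^ (N - j)
            - (N - j : ℕ) * p ^ j * (1 - p) ^ (N - j - 1)) = W p j - W p (j + 1) := by
        simp only [hW]
        have hc : ((j : ℝ) + 1) * N.choose (j + 1) = (N.choose j : ℝ) * (N - j : ℕ) := by
          have h0 : (j + 1) * N.choose (j + 1) = N.choose j * (N - j) := by
            rw [Nat.mul_comm]; exact Nat.choose_succ_right_eq N j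
          exact_mod_cast h0
        have he : N - (j + 1) = N - j - 1 := by omega
        have he2 : (j + 1) - 1 = j := by omega
        rw [he, he2]
        push_cast
        linear_combination (p ^ j * (1 - p) ^ (N - j - 1)) * hc
      rw [key] at h1
      convert h1 using 2
      ring
    have := HasDerivAt.fun_sum hterm
    have htel : ∑ j ∈ Finset.Ico m (N + 1), (W p j - W p (j + 1)) = W p m - W p (N + 1) := by
      rw [Finset.sum_Ico_eq_sum_range]
      have heq : ∀ i, W p (m + i) - W p (m + i + 1) =
          (fun i => W p (m + i)) i - (fun i => W p (m + i)) (i + 1) := by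
        intro i; rw [Nat.add_assoc]
      simp_rw [heq]
      rw [Finset.sum_range_sub']
      have e2 : m + (N + 1 - m) = N + 1 := by omega
      rw [Nat.add_zero, e2]
    rw [htel] at this
    have hWN : W p (N + 1) = 0 := by simp [hW, Nat.choose_succ_self]
    rw [hWN, sub_zero] at this
    simp only [hW] at this
    exact this
  have hgd : ∀ p, HasDerivAt g ((m : ℝ) * N.choose m * p ^ (m - 1) * (1 - p) ^ (N - m)) p := by
    intro p
    have hint : IntervalIntegrable (fun x : ℝ => x ^ (m - 1) * (1 - x) ^ (N - m)) volume 0 p :=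
      hcont.intervalIntegrable 0 p
    have := (intervalIntegral.integral_hasStrictDerivAt_right hint
      (hcont.stronglyMeasurableAtFilter _ _) hcont.continuousAt).hasDerivAt
    have h2 := this.const_mul ((m : ℝ) * N.choose m)
    refine h2.congr_deriv ?_
    ring
  have hconst : ∀ p, f p - g p = f 0 - g 0 := by
    intro p
    have hd : Differentiable ℝ (fun p => f p - g p) :=
      fun p => ((hfd p).sub (hgd p)).differentiableAt
    have hd0 : ∀ p, deriv (fun p => f p - g p) p = 0 := by
      intro p
      rw [HasDerivAt.deriv (f := fun p => f p - g p) ((hfd p).sub (hgd p))]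
      ring
    exact is_const_of_deriv_eq_zero hd hd0 p 0
  have hf0 : f 0 = 0 := by
    simp only [f]
    apply Finset.sum_eq_zero
    intro j hj
    simp only [Finset.mem_Ico] at hj
    rw [zero_pow (by omega)]
    ring
  have hg0 : g 0 = 0 := by simp [g]
  have := hconst p
  rw [hf0, hg0, sub_zero] at this
  show f p = g p
  linarith [this]

lemma meas_count {Ω : Type*} [MeasurableSpace Ω] (ℙ : Measure Ω) [IsProbabilityMeasure ℙ] {N : ℕ}
    (U : Fin (N + 1) → Ω → ℝ) (hU : ∀ i, Measurable (U i))
    (hindep : ProbabilityTheory.iIndepFun U ℙ)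
    (μ : Measure ℝ) [IsProbabilityMeasure μ] (hlaw : ∀ i, Measure.map (U i) ℙ = μ)
    (x : ℝ) (m : ℕ) (p : ℝ) (hp : μ (Set.Iic x) = ENNReal.ofReal p)
    (hp0 : 0 ≤ p) (hp1 : p ≤ 1) :
    ℙ {ω | m ≤ (Finset.univ.filter fun i : Fin N => U i.castSucc ω ≤ x).card}
      = ENNReal.ofReal (∑ j ∈ Finset.Ico m (N + 1),
          (N.choose j : ℝ) * p ^ j * (1 - p) ^ (N - j)) := by
  classical
  -- the events
  set A : Fin N → Set Ω := fun i => (U i.castSucc) ⁻¹' (Set.Iic x) with hA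
  have hAmeas : ∀ i, MeasurableSet (A i) := fun i => (hU _) measurableSet_Iic
  set E : Finset (Fin N) → Set Ω := fun s =>
    {ω | (Finset.univ.filter fun i : Fin N => U i.castSucc ω ≤ x) = s} with hE
  have hEeq : ∀ s, E s = ⋂ i : Fin N, (if i ∈ s then A i else (A i)ᶜ) := by
    intro s
    ext ω
    simp only [hE, Set.mem_setOf_eq, Set.mem_iInter, Finset.ext_iff, Finset.mem_filter,
      Finset.mem_univ, true_and, hA]
    constructor
    · intro h i
      by_cases hi : i ∈ s
      · simp only [if_pos hi, Set.mem_preimage, Set.mem_Iic]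
        exact (h i).mpr hi
      · simp only [if_neg hi, Set.mem_compl_iff, Set.mem_preimage, Set.mem_Iic]
        exact fun hle => hi ((h i).mp hle)
    · intro h i
      have hh := h i
      constructor
      · intro hle
        by_contra hi
        simp only [if_neg hi, Set.mem_compl_iff, Set.mem_preimage, Set.mem_Iic] at hh
        exact hh hle
      · intro hi
        simpa only [if_pos hi, Set.mem_preimage, Set.mem_Iic] using hh
  have hEmeas : ∀ s, MeasurableSet (E s) := by
    intro s
    rw [hEeq s]
    refine MeasurableSet.iInter fun i => ?_
    split_ifs with hi
    · exact hAmeas i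
    · exact (hAmeas i).compl
  -- probability of E s
  have hIic : ∀ i : Fin (N + 1), ℙ ((U i) ⁻¹' (Set.Iic x)) = ENNReal.ofReal p := by
    intro i
    rw [← Measure.map_apply (hU i) measurableSet_Iic, hlaw i, hp]
  have hIoi : ∀ i : Fin (N + 1), ℙ ((U i) ⁻¹' (Set.Ioi x)) = ENNReal.ofReal (1 - p) := by
    intro i
    rw [← Measure.map_apply (hU i) measurableSet_Ioi, hlaw i]
    have h1 : Set.Ioi x = (Set.Iic x)ᶜ := by simp
    rw [h1, measure_compl measurableSet_Iic (measure_ne_top μ _), hp, measure_univ,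
      ← ENNReal.ofReal_one, ← ENNReal.ofReal_sub _ hp0]
  have hPE : ∀ s : Finset (Fin N),
      ℙ (E s) = ENNReal.ofReal p ^ s.card * ENNReal.ofReal (1 - p) ^ (N - s.card) := by
    intro s
    -- reindex through Fin (N+1)
    set g : Fin (N + 1) → Set Ω := fun i' =>
      if h : ∃ j : Fin N, j.castSucc = i' then
        (if h.choose ∈ s then (U i') ⁻¹' (Set.Iic x) else (U i') ⁻¹' (Set.Ioi x))
      else Set.univ with hg
    have hgj : ∀ j : Fin N, g j.castSucc =
        (if j ∈ s then (U j.castSucc) ⁻¹' (Set.Iic x) else (U j.castSucc) ⁻¹' (Set.Ioi x)) := by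
      intro j
      have hex : ∃ j' : Fin N, j'.castSucc = j.castSucc := ⟨j, rfl⟩
      have hch : hex.choose = j := Fin.castSucc_injective N hex.choose_spec
      simp [hg, dif_pos hex, hch]
    set T : Finset (Fin (N + 1)) := Finset.univ.image Fin.castSucc with hT
    have hEg : E s = ⋂ i ∈ T, g i := by
      rw [hEeq s]
      ext ω
      simp only [Set.mem_iInter, hT, Finset.mem_image, Finset.mem_univ, true_and]
      constructor
      · rintro h i' ⟨j, rfl⟩
        have := h j
        rw [hgj j]
        by_cases hj : j ∈ s <;> simp only [hj, if_true, if_false] at this ⊢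
        · exact this
        · simpa [hA, Set.mem_Ioi, not_le] using this
      · intro h j
        have := h j.castSucc ⟨j, rfl⟩
        rw [hgj j] at this
        by_cases hj : j ∈ s <;> simp only [hj, if_true, if_false] at this ⊢
        · exact this
        · simpa [hA, Set.mem_Ioi, not_le] using this
    have hfact := hindep.meas_biInter (S := T) (s := g) ?_
    · rw [hEg, hfact]
      have : ∀ i' ∈ T, ℙ (g i') = if (∃ j ∈ s, j.castSucc = i') then ENNReal.ofReal p
          else ENNReal.ofReal (1 - p) := by
        intro i' hi'
        simp only [hT, Finset.mem_image, Finset.mem_univ, true_and] at hi'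
        obtain ⟨j, rfl⟩ := hi'
        rw [hgj j]
        by_cases hj : j ∈ s
        · rw [if_pos hj, if_pos ⟨j, hj, rfl⟩, hIic]
        · rw [if_neg hj, if_neg, hIoi]
          rintro ⟨j', hj', hjj⟩
          exact hj (Fin.castSucc_injective N hjj ▸ hj')
      rw [Finset.prod_congr rfl this, hT, Finset.prod_image
        (fun a _ b _ h => Fin.castSucc_injective N h)]
      have : ∀ j : Fin N, (if (∃ j' ∈ s, j'.castSucc = j.castSucc) then ENNReal.ofReal p
          else ENNReal.ofReal (1 - p)) = (if j ∈ s then ENNReal.ofReal p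
          else ENNReal.ofReal (1 - p)) := by
        intro j
        congr 1
        simp only [eq_iff_iff]
        constructor
        · rintro ⟨j', hj', h⟩; exact (Fin.castSucc_injective N h) ▸ hj'
        · intro h; exact ⟨j, h, rfl⟩
      rw [Finset.prod_congr rfl (fun j _ => this j), ← Finset.prod_mul_prod_compl s]
      rw [Finset.prod_congr rfl (fun j hj => if_pos hj),
        Finset.prod_congr rfl (fun j hj => if_neg (by simpa using hj))]
      simp [Finset.card_compl]
    · intro i' hi'
      simp only [hT, Finset.mem_image, Finset.mem_univ, true_and] at hi'
      obtain ⟨j, rfl⟩ := hi'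
      rw [hgj j]
      by_cases hj : j ∈ s
      · rw [if_pos hj]; exact ⟨Set.Iic x, measurableSet_Iic, rfl⟩
      · rw [if_neg hj]; exact ⟨Set.Ioi x, measurableSet_Ioi, rfl⟩
  -- decompose the event
  set P : Finset (Finset (Fin N)) := Finset.univ.filter (fun s => m ≤ s.card) with hP
  have hunion : {ω | m ≤ (Finset.univ.filter fun i : Fin N => U i.castSucc ω ≤ x).card}
      = ⋃ s ∈ P, E s := by
    ext ω
    simp only [Set.mem_setOf_eq, Set.mem_iUnion, hP, Finset.mem_filter, Finset.mem_univ, true_and,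
      hE]
    constructor
    · intro h
      exact ⟨_, h, rfl⟩
    · rintro ⟨s, hs, hfs⟩
      rw [hfs]; exact hs
  have hdisj : (P : Set (Finset (Fin N))).PairwiseDisjoint E := by
    intro s hs t ht hst
    simp only [Function.onFun, Set.disjoint_left]
    intro ω hωs hωt
    simp only [hE, Set.mem_setOf_eq] at hωs hωt
    exact hst (hωs ▸ hωt ▸ rfl)
  rw [hunion, measure_biUnion_finset hdisj (fun s _ => hEmeas s)]
  rw [Finset.sum_congr rfl (fun s _ => hPE s)]
  -- group by cardinality
  have hPbi : P = (Finset.Ico m (N + 1)).biUnion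
      (fun j => Finset.powersetCard j (Finset.univ : Finset (Fin N))) := by
    ext s
    simp only [hP, Finset.mem_filter, Finset.mem_univ, true_and, Finset.mem_biUnion,
      Finset.mem_Ico, Finset.mem_powersetCard]
    constructor
    · intro h
      refine ⟨s.card, ⟨h, ?_⟩, Finset.subset_univ s, rfl⟩
      have := Finset.card_le_univ s
      simpa using Nat.lt_succ_of_le this
    · rintro ⟨j, ⟨hj, -⟩, -, rfl⟩
      exact hj
  rw [hPbi, Finset.sum_biUnion ?_]
  · rw [ENNReal.ofReal_sum_of_nonneg ?_]
    · apply Finset.sum_congr rfl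
      intro j hj
      have : ∀ s ∈ Finset.powersetCard j (Finset.univ : Finset (Fin N)),
          ENNReal.ofReal p ^ s.card * ENNReal.ofReal (1 - p) ^ (N - s.card)
            = ENNReal.ofReal p ^ j * ENNReal.ofReal (1 - p) ^ (N - j) := by
        intro s hs
        rw [(Finset.mem_powersetCard.mp hs).2]
      rw [Finset.sum_congr rfl this, Finset.sum_const, Finset.card_powersetCard,
        Finset.card_univ, Fintype.card_fin]
      rw [ENNReal.ofReal_mul (by positivity), ENNReal.ofReal_mul (by positivity),
        ENNReal.ofReal_pow hp0, ENNReal.ofReal_pow (by linarith), nsmul_eq_mul]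
      rw [ENNReal.ofReal_natCast]
      ring
    · intro j hj
      have h1p : (0:ℝ) ≤ 1 - p := by linarith
      positivity
  · intro a ha b hb hab
    simp only [Finset.coe_Ico, Set.mem_Ico] at ha hb
    simp only [Function.onFun, Finset.disjoint_left]
    intro s hsa hsb
    rw [Finset.mem_powersetCard] at hsa hsb
    exact hab (hsa.2 ▸ hsb.2 ▸ rfl)

lemma betaFn_fact (m b : ℕ) (hm : 1 ≤ m) (hb : 1 ≤ b) :
    betaFn (m : ℝ) (b : ℝ)
      = (Nat.factorial (m - 1) * Nat.factorial (b - 1) : ℝ) / Nat.factorial (m + b - 1) := by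
  have h1 : (m : ℝ) = ((m - 1 : ℕ) : ℝ) + 1 := by
    have : m - 1 + 1 = m := by omega
    exact_mod_cast (congrArg (Nat.cast (R := ℝ)) this).symm
  have h2 : (b : ℝ) = ((b - 1 : ℕ) : ℝ) + 1 := by
    have : b - 1 + 1 = b := by omega
    exact_mod_cast (congrArg (Nat.cast (R := ℝ)) this).symm
  have h3 : (m : ℝ) + (b : ℝ) = ((m + b - 1 : ℕ) : ℝ) + 1 := by
    have h4 : m + b - 1 + 1 = m + b := by omega
    rw [show ((m + b - 1 : ℕ) : ℝ) + 1 = ((m + b - 1 + 1 : ℕ) : ℝ) by push_cast; ring, h4]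
    push_cast; ring
  rw [betaFn, h3, Real.Gamma_nat_eq_factorial]
  rw [h1, Real.Gamma_nat_eq_factorial, h2, Real.Gamma_nat_eq_factorial]

lemma betaCDF_eq (N m : ℕ) (hm : 1 ≤ m) (hmN : m ≤ N) (t : ℝ) (ht : t ∈ Set.Icc (0:ℝ) 1) :
    (betaMeasureNat m (N + 1 - m)) (Set.Iic t)
      = ENNReal.ofReal (∑ j ∈ Finset.Ico m (N + 1),
          (N.choose j : ℝ) * t ^ j * (1 - t) ^ (N - j)) := by
  set b := N + 1 - m with hbdef
  have hb1 : 1 ≤ b := by omega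
  have hbN : m + b - 1 = N := by omega
  have hbm : b - 1 = N - m := by omega
  set B := betaFn (m : ℝ) (b : ℝ) with hB
  have hBval : B = (Nat.factorial (m - 1) * Nat.factorial (b - 1) : ℝ) / Nat.factorial N := by
    rw [hB, betaFn_fact m b hm hb1, hbN]
  have hBpos : 0 < B := by
    rw [hBval]
    positivity
  have hBinv : ((m : ℝ) * N.choose m) * B = 1 := by
    rw [hBval, hbm]
    have hnat : m * N.choose m * (Nat.factorial (m - 1) * Nat.factorial (N - m))
        = Nat.factorial N := by
      have h1 : m * Nat.factorial (m - 1) = Nat.factorial m := Nat.mul_factorial_pred (by omega)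
      calc m * N.choose m * (Nat.factorial (m - 1) * Nat.factorial (N - m))
          = N.choose m * (m * Nat.factorial (m - 1)) * Nat.factorial (N - m) := by ring
        _ = N.choose m * Nat.factorial m * Nat.factorial (N - m) := by rw [h1]
        _ = Nat.factorial N := Nat.choose_mul_factorial_mul_factorial hmN
    have hNf : (Nat.factorial N : ℝ) ≠ 0 := by positivity
    field_simp
    rw [← hnat]; push_cast; ring
  -- compute the measure
  have hdens_cont : Continuous fun x : ℝ => x ^ (m - 1) * (1 - x) ^ (b - 1) / B := by
    continuity
  have hIcc : Set.Icc (0:ℝ) 1 ∩ Set.Iic t = Set.Icc 0 t := by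
    ext y
    simp only [Set.mem_inter_iff, Set.mem_Icc, Set.mem_Iic]
    obtain ⟨ht0, ht1⟩ := ht
    constructor
    · rintro ⟨⟨h1, h2⟩, h3⟩; exact ⟨h1, h3⟩
    · rintro ⟨h1, h3⟩; exact ⟨⟨h1, by linarith⟩, h3⟩
  have hmeas : (betaMeasureNat m b) (Set.Iic t)
      = ∫⁻ x in Set.Icc (0:ℝ) t, ENNReal.ofReal (x ^ (m - 1) * (1 - x) ^ (b - 1) / B) := by
    rw [betaMeasureNat, withDensity_apply _ measurableSet_Iic]
    rw [lintegral_indicator measurableSet_Icc, Measure.restrict_restrict measurableSet_Icc, hIcc]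
  have hnn : ∀ x ∈ Set.Icc (0:ℝ) t, 0 ≤ x ^ (m - 1) * (1 - x) ^ (b - 1) / B := by
    intro y hy
    obtain ⟨h1, h2⟩ := hy
    have h3 : (0:ℝ) ≤ 1 - y := by
      obtain ⟨ht0, ht1⟩ := ht
      linarith
    positivity
  have hint : IntegrableOn (fun x : ℝ => x ^ (m - 1) * (1 - x) ^ (b - 1) / B)
      (Set.Icc 0 t) volume := hdens_cont.integrableOn_Icc
  have hlint : ∫⁻ x in Set.Icc (0:ℝ) t, ENNReal.ofReal (x ^ (m - 1) * (1 - x) ^ (b - 1) / B)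
      = ENNReal.ofReal (∫ x in Set.Icc (0:ℝ) t, x ^ (m - 1) * (1 - x) ^ (b - 1) / B) := by
    rw [← ofReal_integral_eq_lintegral_ofReal hint]
    exact (ae_restrict_of_forall_mem measurableSet_Icc hnn)
  have hintnn : 0 ≤ ∫ x in Set.Icc (0:ℝ) t, x ^ (m - 1) * (1 - x) ^ (b - 1) / B :=
    setIntegral_nonneg measurableSet_Icc hnn
  rw [hmeas, hlint]
  congr 1
  rw [MeasureTheory.integral_Icc_eq_integral_Ioc,
    ← intervalIntegral.integral_of_le ht.1]
  rw [binom_tail_eq N m hm hmN t]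
  rw [intervalIntegral.integral_div, hbm]
  rw [div_eq_iff (ne_of_gt hBpos)]
  linear_combination (-(∫ x in (0:ℝ)..t, x ^ (m - 1) * (1 - x) ^ (N - m))) * hBinv

lemma binom_tail_one (N m : ℕ) (hm : 1 ≤ m) (hmN : m ≤ N) :
    ∑ j ∈ Finset.Ico m (N + 1), (N.choose j : ℝ) * (1:ℝ) ^ j * (1 - 1) ^ (N - j) = 1 := by
  rw [Finset.sum_eq_single N]
  · simp
  · intro j hj hjN
    simp only [Finset.mem_Ico] at hj
    rw [sub_self, zero_pow (by omega)]
    ring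
  · intro h
    exfalso
    exact h (Finset.mem_Ico.mpr ⟨hmN, Nat.lt_succ_self N⟩)

/-- Dataset-conditional conformal guarantee: let `U 0, …, U (N-1), U_test := U N` be i.i.d.
with continuous CDF `F`, let `v = ⌊(N+1) εhat⌋` with `1 ≤ v ≤ N`, and let `q̂` be the
`(N+1-v)`-th order statistic of the first `N` samples. Then with probability at least `1 - δ`
over the sampling of `U 0, …, U (N-1)`, the conditional coverage
`ℙ(U_test ≤ q̂ ∣ U 0, …, U (N-1)) = F q̂` is at least the `δ`-quantile of the
`Beta (N+1-v, v)` distribution. -/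
theorem dataset_conditional_conformal
    {Ω : Type*} [MeasurableSpace Ω] (ℙ : Measure Ω) [IsProbabilityMeasure ℙ]
    (N : ℕ)
    (μ : Measure ℝ) [IsProbabilityMeasure μ]
    (F : ℝ → ℝ) (hFdef : ∀ x, F x = (μ (Set.Iic x)).toReal) (hFcont : Continuous F)
    (U : Fin (N + 1) → Ω → ℝ) (hU : ∀ i, Measurable (U i))
    (hlaw : ∀ i, Measure.map (U i) ℙ = μ)
    (hindep : ProbabilityTheory.iIndepFun U ℙ)
    (εhat : ℝ) (hεhat : εhat ∈ Set.Ioo (0 : ℝ) 1)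
    (v : ℕ) (hv : (v : ℤ) = ⌊((N : ℝ) + 1) * εhat⌋) (hv1 : 1 ≤ v) (hvN : v ≤ N)
    (δ : ℝ) (hδ : δ ∈ Set.Ioo (0 : ℝ) 1) :
    ℙ {ω | sInf {x : ℝ | x ∈ Set.Icc (0 : ℝ) 1 ∧
            δ ≤ ((betaMeasureNat (N + 1 - v) v) (Set.Iic x)).toReal} ≤
          F (orderStat (⟨N - v, by omega⟩ : Fin N) (fun i : Fin N => U i.castSucc ω))} ≥
      ENNReal.ofReal (1 - δ) := by
  obtain ⟨hδ0, hδ1⟩ := hδ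
  set m := N + 1 - v with hmdef
  have hm1 : 1 ≤ m := by omega
  have hmN : m ≤ N := by omega
  have hNv : N - v + 1 = m := by omega
  have hβmeas : betaMeasureNat (N + 1 - v) v = betaMeasureNat m (N + 1 - m) := by
    rw [show N + 1 - m = v from by omega]
  -- the binomial tail function
  set btail : ℝ → ℝ :=
    fun t => ∑ j ∈ Finset.Ico m (N + 1), (N.choose j : ℝ) * t ^ j * (1 - t) ^ (N - j)
    with hbtail
  have hbt_nonneg : ∀ t ∈ Set.Icc (0:ℝ) 1, 0 ≤ btail t := by
    intro t ⟨ht0, ht1⟩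
    apply Finset.sum_nonneg
    intro j hj
    have h1 : (0:ℝ) ≤ 1 - t := by linarith
    positivity
  -- the Beta CDF
  set G : ℝ → ℝ := fun t => ((betaMeasureNat (N + 1 - v) v) (Set.Iic t)).toReal with hG
  have hGmeasEq : ∀ t ∈ Set.Icc (0:ℝ) 1,
      (betaMeasureNat (N + 1 - v) v) (Set.Iic t) = ENNReal.ofReal (btail t) := by
    intro t ht
    rw [hβmeas]
    exact betaCDF_eq N m hm1 hmN t ht
  have hGval : ∀ t ∈ Set.Icc (0:ℝ) 1, G t = btail t := by
    intro t ht
    rw [hG]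
    simp only
    rw [hGmeasEq t ht, ENNReal.toReal_ofReal (hbt_nonneg t ht)]
  have hGmono : ∀ p t, p ∈ Set.Icc (0:ℝ) 1 → t ∈ Set.Icc (0:ℝ) 1 → p ≤ t → G p ≤ G t := by
    intro p t hp ht hpt
    apply ENNReal.toReal_mono
    · rw [hGmeasEq t ht]; exact ENNReal.ofReal_ne_top
    · exact measure_mono (Set.Iic_subset_Iic.mpr hpt)
  have hG1 : G 1 = 1 := by
    rw [hGval 1 ⟨zero_le_one, le_refl 1⟩, hbtail]
    exact binom_tail_one N m hm1 hmN
  -- the quantile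
  set S : Set ℝ := {x : ℝ | x ∈ Set.Icc (0 : ℝ) 1 ∧
      δ ≤ ((betaMeasureNat (N + 1 - v) v) (Set.Iic x)).toReal} with hS
  set β := sInf S with hβ
  have hS1 : (1:ℝ) ∈ S := ⟨⟨zero_le_one, le_refl 1⟩, by
    show δ ≤ G 1
    rw [hG1]; exact hδ1.le⟩
  have hSbdd : BddBelow S := ⟨0, fun y hy => hy.1.1⟩
  have hβle1 : β ≤ 1 := csInf_le hSbdd hS1
  -- β > 0
  set K : ℝ := ∑ j ∈ Finset.Ico m (N + 1), (N.choose j : ℝ) with hK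
  have hK0 : 0 ≤ K := Finset.sum_nonneg fun j _ => by positivity
  set c : ℝ := min (δ / (2 * (K + 1))) 1 with hc
  have hc0 : 0 < c := lt_min (by positivity) one_pos
  have hc1 : c ≤ 1 := min_le_right _ _
  have hcmem : c ∈ Set.Icc (0:ℝ) 1 := ⟨hc0.le, hc1⟩
  have hGc : G c < δ := by
    rw [hGval c hcmem, hbtail]
    have hsum : ∑ j ∈ Finset.Ico m (N + 1), (N.choose j : ℝ) * c ^ j * (1 - c) ^ (N - j)
        ≤ K * c := by
      rw [hK, Finset.sum_mul]
      apply Finset.sum_le_sum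
      intro j hj
      simp only [Finset.mem_Ico] at hj
      have h1 : c ^ j ≤ c := pow_le_of_le_one hc0.le hc1 (by omega)
      have h2 : (1 - c) ^ (N - j) ≤ 1 :=
        pow_le_one₀ (by linarith) (by linarith)
      calc (N.choose j : ℝ) * c ^ j * (1 - c) ^ (N - j)
          ≤ (N.choose j : ℝ) * c ^ j * 1 := by
            apply mul_le_mul_of_nonneg_left h2 (by positivity)
        _ = (N.choose j : ℝ) * c ^ j := by ring
        _ ≤ (N.choose j : ℝ) * c := by
            apply mul_le_mul_of_nonneg_left h1 (by positivity)
    have hcle : c ≤ δ / (2 * (K + 1)) := min_le_left _ _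
    have : K * c ≤ (K + 1) * (δ / (2 * (K + 1))) := by
      apply mul_le_mul (by linarith) hcle hc0.le (by linarith)
    have heq : (K + 1) * (δ / (2 * (K + 1))) = δ / 2 := by
      field_simp
    calc _ ≤ K * c := hsum
      _ ≤ δ / 2 := by rw [heq] at this; exact this
      _ < δ := by linarith
  have hβpos : 0 < c ∧ c ≤ β := by
    refine ⟨hc0, le_csInf ⟨1, hS1⟩ ?_⟩
    intro y hy
    by_contra hlt
    push_neg at hlt
    have : G y ≤ G c := hGmono y c hy.1 hcmem hlt.le
    have hGy : δ ≤ G y := hy.2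
    linarith
  have hGlt : ∀ t, t ∈ Set.Icc (0:ℝ) 1 → t < β → G t < δ := by
    intro t ht htβ
    by_contra hge
    push_neg at hge
    have : t ∈ S := ⟨ht, hge⟩
    have := csInf_le hSbdd this
    linarith
  -- facts about F
  have hFmono : Monotone F := by
    intro a b hab
    rw [hFdef a, hFdef b]
    exact ENNReal.toReal_mono (measure_ne_top μ _) (measure_mono (Set.Iic_subset_Iic.mpr hab))
  have hF01 : ∀ y, F y ∈ Set.Icc (0:ℝ) 1 := by
    intro y
    rw [hFdef y]
    constructor
    · exact ENNReal.toReal_nonneg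
    · have h1 : μ (Set.Iic y) ≤ 1 := prob_le_one
      have h2 : (μ (Set.Iic y)).toReal ≤ (1 : ℝ≥0∞).toReal :=
        ENNReal.toReal_mono ENNReal.one_ne_top h1
      simpa using h2
  have hFiic : ∀ y, μ (Set.Iic y) = ENNReal.ofReal (F y) := by
    intro y
    rw [hFdef y, ENNReal.ofReal_toReal (measure_ne_top μ _)]
  -- existence of points with small F
  have hexF_le : ∀ t : ℝ, 0 < t → ∃ y : ℝ, F y ≤ t := by
    intro t ht
    have hanti : Antitone (fun n : ℕ => Set.Iic (-(n:ℝ))) := by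
      intro a b hab
      exact Set.Iic_subset_Iic.mpr (by exact_mod_cast neg_le_neg (by exact_mod_cast hab))
    have hiInter : (⋂ n : ℕ, Set.Iic (-(n:ℝ))) = ∅ := by
      ext y
      simp only [Set.mem_iInter, Set.mem_Iic, Set.mem_empty_iff_false, iff_false, not_forall,
        not_le]
      obtain ⟨n, hn⟩ := exists_nat_gt (-y)
      exact ⟨n, by linarith⟩
    have htend := tendsto_measure_iInter_atTop (μ := μ)
      (fun n => measurableSet_Iic.nullMeasurableSet) hanti ⟨0, measure_ne_top μ _⟩
    rw [hiInter, measure_empty] at htend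
    have hev := htend.eventually_lt_const (by
      show (0 : ℝ≥0∞) < ENNReal.ofReal t
      exact ENNReal.ofReal_pos.mpr ht)
    obtain ⟨n, hn⟩ := hev.exists
    refine ⟨-(n:ℝ), ?_⟩
    rw [hFdef]
    exact le_of_lt (by
      rw [← ENNReal.ofReal_lt_ofReal_iff ht, ENNReal.ofReal_toReal (measure_ne_top μ _)]
      exact hn)
  have hexF_gt : ∀ t : ℝ, t < 1 → ∃ z : ℝ, t < F z := by
    intro t ht
    have htend := tendsto_measure_Iic_atTop μ
    rw [measure_univ] at htend
    have hev := htend.eventually_const_lt (ENNReal.ofReal_lt_one.mpr ht)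
    obtain ⟨z, hz⟩ := hev.exists
    refine ⟨z, ?_⟩
    rw [hFiic z] at hz
    by_contra hle
    push_neg at hle
    exact absurd hz (not_lt.mpr (ENNReal.ofReal_le_ofReal hle))
  -- quantile-like point for F
  have hSt : ∀ t : ℝ, 0 < t → t < 1 →
      ∃ x : ℝ, F x ≤ t ∧ ∀ y, F y ≤ t → y ≤ x := by
    intro t ht0 ht1
    set St : Set ℝ := {y | F y ≤ t} with hStdef
    have hne : St.Nonempty := hexF_le t ht0
    have hbdd : BddAbove St := by
      obtain ⟨z, hz⟩ := hexF_gt t ht1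
      refine ⟨z, fun y hy => ?_⟩
      by_contra hyz
      push_neg at hyz
      have := hFmono hyz.le
      simp only [hStdef, Set.mem_setOf_eq] at hy
      linarith
    have hclosed : IsClosed St := IsClosed.preimage hFcont isClosed_Iic
    refine ⟨sSup St, hclosed.csSup_mem hne hbdd, fun y hy => le_csSup hbdd hy⟩
  -- measurability of counting events
  have hcount_meas : ∀ y : ℝ, MeasurableSet
      {ω : Ω | m ≤ (Finset.univ.filter fun i : Fin N => U i.castSucc ω ≤ y).card} := by
    intro y
    have hfun : Measurable fun ω : Ω =>
        (Finset.univ.filter fun i : Fin N => U i.castSucc ω ≤ y).card := by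
      have heq : (fun ω : Ω => (Finset.univ.filter fun i : Fin N => U i.castSucc ω ≤ y).card)
          = fun ω => ∑ i : Fin N, if U i.castSucc ω ≤ y then 1 else 0 := by
        funext ω
        rw [Finset.card_filter]
      rw [heq]
      apply Finset.measurable_sum
      intro i _
      exact Measurable.ite ((hU i.castSucc) measurableSet_Iic) measurable_const measurable_const
    exact hfun trivial
  -- probability of counting events
  have hDval : ∀ y : ℝ,
      ℙ {ω : Ω | m ≤ (Finset.univ.filter fun i : Fin N => U i.castSucc ω ≤ y).card}
        = ENNReal.ofReal (btail (F y)) := by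
    intro y
    exact meas_count ℙ U hU hindep μ hlaw y m (F y) (hFiic y) (hF01 y).1 (hF01 y).2
  obtain ⟨hc0', hcβ⟩ := hβpos
  have hβ0 : 0 < β := lt_of_lt_of_le hc0 hcβ
  -- approximating sequence
  set tseq : ℕ → ℝ := fun n => β - β / ((n : ℝ) + 2) with htseqdef
  have htseq_pos : ∀ n : ℕ, 0 < tseq n ∧ tseq n < β := by
    intro n
    have h2 : (2:ℝ) ≤ (n:ℝ) + 2 := by
      have : (0:ℝ) ≤ (n:ℝ) := Nat.cast_nonneg n
      linarith
    have hd2 : β / ((n:ℝ) + 2) ≤ β / 2 := by gcongr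
    have hdpos : 0 < β / ((n:ℝ) + 2) := by positivity
    constructor
    · have : β / 2 < β := by linarith
      simp only [htseqdef]
      linarith
    · simp only [htseqdef]
      linarith
  have htseq_lt1 : ∀ n, tseq n < 1 := fun n => lt_of_lt_of_le (htseq_pos n).2 hβle1
  have htseq_mono : Monotone tseq := by
    intro a b hab
    simp only [htseqdef]
    have hcast : (a:ℝ) ≤ (b:ℝ) := Nat.cast_le.mpr hab
    have : β / ((b:ℝ) + 2) ≤ β / ((a:ℝ) + 2) := by gcongr
    linarith
  -- quantile points
  choose xseq hx1 hx2 using fun n : ℕ => hSt (tseq n) (htseq_pos n).1 (htseq_lt1 n)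
  have hxmono : Monotone xseq := by
    intro a b hab
    exact hx2 b (xseq a) (le_trans (hx1 a) (htseq_mono hab))
  -- the union of counting events
  set D : ℕ → Set Ω := fun n =>
    {ω : Ω | m ≤ (Finset.univ.filter fun i : Fin N => U i.castSucc ω ≤ xseq n).card} with hD
  have hDmono : Monotone D := by
    intro a b hab ω hω
    simp only [hD, Set.mem_setOf_eq] at hω ⊢
    refine le_trans hω (Finset.card_le_card (Finset.monotone_filter_right _ ?_))
    intro i _ hi
    exact le_trans hi (hxmono hab)
  -- the bad event is contained in the union
  set q : Ω → ℝ := fun ω =>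
    orderStat (⟨N - v, by omega⟩ : Fin N) (fun i : Fin N => U i.castSucc ω) with hqdef
  have hC_sub : {ω : Ω | F (q ω) < β} ⊆ ⋃ n, D n := by
    intro ω hω
    simp only [Set.mem_setOf_eq] at hω
    set r := F (q ω) with hr
    have hr0 : 0 ≤ r := (hF01 (q ω)).1
    have hβr : 0 < β - r := by linarith
    obtain ⟨n, hn⟩ := exists_nat_ge (β / (β - r))
    have hkey : β / ((n:ℝ) + 2) ≤ β - r := by
      rw [div_le_iff₀ (by positivity)]
      rw [div_le_iff₀ hβr] at hn
      nlinarith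
    have hrt : r ≤ tseq n := by
      simp only [htseqdef]
      linarith
    have hqx : q ω ≤ xseq n := hx2 n (q ω) (le_trans (le_of_eq hr.symm) hrt)
    have hcard := (orderStat_le_iff (⟨N - v, by omega⟩ : Fin N)
      (fun i : Fin N => U i.castSucc ω) (xseq n)).mp hqx
    simp only at hcard
    rw [hNv] at hcard
    exact Set.mem_iUnion.mpr ⟨n, hcard⟩
  -- bound the bad event
  have hPC : ℙ {ω : Ω | F (q ω) < β} ≤ ENNReal.ofReal δ := by
    refine le_trans (measure_mono hC_sub) ?_
    rw [hDmono.measure_iUnion]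
    refine iSup_le fun n => ?_
    rw [hD]
    simp only
    rw [hDval (xseq n)]
    apply ENNReal.ofReal_le_ofReal
    have h1 : btail (F (xseq n)) = G (F (xseq n)) := (hGval _ (hF01 _)).symm
    have htmem : tseq n ∈ Set.Icc (0:ℝ) 1 := ⟨(htseq_pos n).1.le, (htseq_lt1 n).le⟩
    have h2 : G (F (xseq n)) ≤ G (tseq n) := hGmono _ _ (hF01 _) htmem (hx1 n)
    have h3 : G (tseq n) < δ := hGlt (tseq n) htmem (htseq_pos n).2
    linarith
  -- conclude
  show ℙ {ω : Ω | β ≤ F (q ω)} ≥ ENNReal.ofReal (1 - δ)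
  have hcup : {ω : Ω | β ≤ F (q ω)} ∪ {ω : Ω | F (q ω) < β} = Set.univ := by
    ext ω
    simp only [Set.mem_union, Set.mem_setOf_eq, Set.mem_univ, iff_true]
    exact le_or_gt β (F (q ω))
  have h1 : (1 : ℝ≥0∞) ≤ ℙ {ω : Ω | β ≤ F (q ω)} + ℙ {ω : Ω | F (q ω) < β} := by
    have := measure_union_le (μ := ℙ) {ω : Ω | β ≤ F (q ω)} {ω : Ω | F (q ω) < β}
    rw [hcup, measure_univ] at this
    exact this
  have h2 : (1 : ℝ≥0∞) ≤ ℙ {ω : Ω | β ≤ F (q ω)} + ENNReal.ofReal δ :=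
    le_trans h1 (add_le_add le_rfl hPC)
  have h3 : ENNReal.ofReal (1 - δ) = 1 - ENNReal.ofReal δ := by
    rw [ENNReal.ofReal_sub _ hδ0.le, ENNReal.ofReal_one]
  rw [h3]
  exact tsub_le_iff_right.mpr h2
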